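/- For any infinite sequence k₀, k₁, k₂, … of positive natural numbers, there exists a sequence of vectors w₀, w₁, w₂, … in the open positive cone ℝ₊³ satisfying wᵢ = B(kᵢ)·wᵢ₊₁ for all i ≥ 0, and any two such sequences agree up to multiplication by a single positive scalar. -/

import Mathlib

open Matrix

/-- The matrix `B(k)` from the paper, over the reals. -/
def Bmat (k : ℕ) : Matrix (Fin 3) (Fin 3) ℝ := !![(k : ℝ), (k : ℝ), 1; 1, 0, 0; 0, 1, 0]

lemma Bmat_mulVec (κ : ℕ) (v : Fin 3 → ℝ) :
    (Bmat κ).mulVec v = ![κ * (v 0 + v 1) + v 2, v 0, v 1] := by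
  funext j
  fin_cases j <;>
    simp [Bmat, Matrix.mulVec, dotProduct, Fin.sum_univ_three] <;> ring

def SRel (k : ℕ → ℕ) (a : ℕ → ℝ) (n : ℕ) : Prop :=
  a n = k n * (a (n+1) + a (n+2)) + a (n+3)

section Core
variable {k : ℕ → ℕ} {a u : ℕ → ℝ} {n : ℕ}

lemma kcast (hk : ∀ i, 1 ≤ k i) (n : ℕ) : (1:ℝ) ≤ (k n : ℝ) := by
  exact_mod_cast hk n

lemma dec1 (hk : ∀ i, 1 ≤ k i) (hp : ∀ n, 0 < a n) (h : SRel k a n) :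
    a (n+1) + a (n+2) + a (n+3) ≤ a n := by
  have h1 := kcast hk n
  have p1 := hp (n+1); have p2 := hp (n+2)
  rw [SRel] at h; nlinarith

lemma le3k (hk : ∀ i, 1 ≤ k i) (hp : ∀ n, 0 < a n) (h : SRel k a n)
    (h' : SRel k a (n+1)) : a n ≤ 3 * k n * a (n+1) := by
  have h1 := kcast hk n
  have hd := dec1 hk hp h'
  have p2 := hp (n+2); have p3 := hp (n+3); have p4 := hp (n+4)
  rw [SRel] at h
  nlinarith

lemma half (hk : ∀ i, 1 ≤ k i) (hp : ∀ n, 0 < a n) (h1 : SRel k a (n+1))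
    (h2 : SRel k a (n+2)) : 2 * a (n+3) ≤ a (n+1) := by
  have hd1 := dec1 hk hp h1
  have hd2 := dec1 hk hp h2
  have p4 := hp (n+4); have p5 := hp (n+5)
  nlinarith

/-- ratio comparison: c n ≤ 3 c (n+1) -/
lemma ratio_up (hk : ∀ i, 1 ≤ k i) (hp : ∀ n, 0 < a n) (hq : ∀ n, 0 < u n)
    (ha : SRel k a n) (hu : SRel k u n) (hu' : SRel k u (n+1)) :
    u n / a n ≤ 3 * (u (n+1) / a (n+1)) := by
  have h1 := kcast hk n
  have hua := le3k hk hq hu hu'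
  have hal : k n * a (n+1) ≤ a n := by
    have p2 := hp (n+2); have p3 := hp (n+3)
    rw [SRel] at ha; nlinarith
  have p0 := hp n; have p1 := hp (n+1); have q1 := hq (n+1)
  have key : u n * a (n+1) ≤ (3 * u (n+1)) * a n := by nlinarith
  have := (div_le_div_iff₀ p0 p1).mpr key
  calc u n / a n ≤ 3 * u (n+1) / a (n+1) := this
    _ = 3 * (u (n+1) / a (n+1)) := by ring
  
/-- ratio comparison: c (n+1) ≤ 3 c n -/
lemma ratio_down (hk : ∀ i, 1 ≤ k i) (hp : ∀ n, 0 < a n) (hq : ∀ n, 0 < u n)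
    (ha : SRel k a n) (ha' : SRel k a (n+1)) (hu : SRel k u n) :
    u (n+1) / a (n+1) ≤ 3 * (u n / a n) := by
  have h1 := kcast hk n
  have haa := le3k hk hp ha ha'
  have hul : k n * u (n+1) ≤ u n := by
    have p2 := hq (n+2); have p3 := hq (n+3)
    rw [SRel] at hu; nlinarith
  have p0 := hp n; have p1 := hp (n+1); have q1 := hq (n+1)
  have key : u (n+1) * a n ≤ (3 * u n) * a (n+1) := by nlinarith
  have := (div_le_div_iff₀ p1 p0).mpr key
  calc u (n+1) / a (n+1) ≤ 3 * u n / a n := this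
    _ = 3 * (u n / a n) := by ring

/-- window min: min of next three ratios ≤ current ratio -/
lemma window_min (hp : ∀ n, 0 < a n) (hq : ∀ n, 0 < u n)
    (ha : SRel k a n) (hu : SRel k u n) (hkk : (0:ℝ) ≤ k n) :
    min (u (n+1) / a (n+1)) (min (u (n+2) / a (n+2)) (u (n+3) / a (n+3))) ≤ u n / a n := by
  set m := min (u (n+1) / a (n+1)) (min (u (n+2) / a (n+2)) (u (n+3) / a (n+3))) with hm
  have b1 : m * a (n+1) ≤ u (n+1) := by
    have := min_le_left (u (n+1) / a (n+1)) (min (u (n+2) / a (n+2)) (u (n+3) / a (n+3)))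
    rw [← hm] at this
    calc m * a (n+1) ≤ u (n+1) / a (n+1) * a (n+1) := by
          have := hp (n+1); nlinarith
      _ = u (n+1) := div_mul_cancel₀ _ (ne_of_gt (hp (n+1)))
  have b2 : m * a (n+2) ≤ u (n+2) := by
    have h2 : m ≤ u (n+2) / a (n+2) := le_trans (min_le_right _ _) (min_le_left _ _)
    calc m * a (n+2) ≤ u (n+2) / a (n+2) * a (n+2) := by
          have := hp (n+2); nlinarith
      _ = u (n+2) := div_mul_cancel₀ _ (ne_of_gt (hp (n+2)))
  have b3 : m * a (n+3) ≤ u (n+3) := by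
    have h3 : m ≤ u (n+3) / a (n+3) := le_trans (min_le_right _ _) (min_le_right _ _)
    calc m * a (n+3) ≤ u (n+3) / a (n+3) * a (n+3) := by
          have := hp (n+3); nlinarith
      _ = u (n+3) := div_mul_cancel₀ _ (ne_of_gt (hp (n+3)))
  rw [le_div_iff₀ (hp n)]
  rw [SRel] at ha hu
  rw [ha, hu]
  nlinarith [mul_le_mul_of_nonneg_left b1 hkk, mul_le_mul_of_nonneg_left b2 hkk]


noncomputable def crat (a u : ℕ → ℝ) (n : ℕ) : ℝ := u n / a n

noncomputable def min3 (a u : ℕ → ℝ) (n : ℕ) : ℝ :=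
  min (crat a u n) (min (crat a u (n+1)) (crat a u (n+2)))

lemma crat_pos (hp : ∀ n, 0 < a n) (hq : ∀ n, 0 < u n) (n : ℕ) :
    0 < crat a u n := div_pos (hq n) (hp n)

lemma min3_mono (hk : ∀ i, 1 ≤ k i) (hp : ∀ n, 0 < a n) (hq : ∀ n, 0 < u n) {N : ℕ}
    (hr : ∀ m < N, SRel k a m) (hr' : ∀ m < N, SRel k u m) :
    ∀ n ≤ N, min3 a u n ≤ min3 a u 0 := by
  intro n
  induction n with
  | zero => intro _; exact le_refl _
  | succ n ih =>
    intro hn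
    have hnN : n < N := hn
    have step : min3 a u (n+1) ≤ min3 a u n := by
      have hw := window_min (k := k) (a := a) (u := u) (n := n) hp hq
        (hr n hnN) (hr' n hnN) (by positivity)
      refine le_min ?_ (le_min ?_ ?_)
      · exact hw
      · exact min_le_left _ _
      · exact le_trans (min_le_right _ _) (min_le_left _ _)
    exact le_trans step (ih (le_of_lt hn))

lemma crat_le9 (hk : ∀ i, 1 ≤ k i) (hp : ∀ n, 0 < a n) (hq : ∀ n, 0 < u n) {N : ℕ}
    (hr : ∀ m < N, SRel k a m) (hr' : ∀ m < N, SRel k u m) :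
    ∀ n, n + 3 ≤ N → crat a u n ≤ 9 * min3 a u 0 := by
  intro n hn
  have hm : min3 a u n ≤ min3 a u 0 :=
    min3_mono hk hp hq hr hr' n (by omega)
  have h01 : crat a u n ≤ 3 * crat a u (n+1) :=
    ratio_up hk hp hq (hr n (by omega)) (hr' n (by omega)) (hr' (n+1) (by omega))
  have h12 : crat a u (n+1) ≤ 3 * crat a u (n+2) :=
    ratio_up hk hp hq (hr (n+1) (by omega)) (hr' (n+1) (by omega)) (hr' (n+2) (by omega))
  have key : crat a u n ≤ 9 * min3 a u n := by
    have p0 := crat_pos (a := a) (u := u) hp hq n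
    have p1 := crat_pos (a := a) (u := u) hp hq (n+1)
    have p2 := crat_pos (a := a) (u := u) hp hq (n+2)
    rcases le_total (crat a u n) (min (crat a u (n+1)) (crat a u (n+2))) with h | h
    · rw [min3, min_eq_left h]; linarith
    · rw [min3, min_eq_right h]
      rcases le_total (crat a u (n+1)) (crat a u (n+2)) with h2 | h2
      · rw [min_eq_left h2]; linarith
      · rw [min_eq_right h2]; linarith
  calc crat a u n ≤ 9 * min3 a u n := key
    _ ≤ 9 * min3 a u 0 := by linarith

lemma contract (hk : ∀ i, 1 ≤ k i) (hp : ∀ n, 0 < a n) (hq : ∀ n, 0 < u n)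
    (ha0 : SRel k a n) (ha1 : SRel k a (n+1)) (ha2 : SRel k a (n+2)) (hu0 : SRel k u n) :
    |crat a u n - crat a u (n+1)| ≤
      5/6 * max |crat a u (n+1) - crat a u (n+2)| |crat a u (n+2) - crat a u (n+3)| := by
  have h1 := kcast hk n
  have p0 := hp n; have p1 := hp (n+1); have p2 := hp (n+2); have p3 := hp (n+3)
  have q1 := hq (n+1); have q2 := hq (n+2); have q3 := hq (n+3)
  set β : ℝ := (k n * a (n+2) + a (n+3)) / a n with hβ
  set γ : ℝ := a (n+3) / a n with hγ
  have hbpos : 0 ≤ β := by rw [hβ]; positivity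
  have hgpos : 0 ≤ γ := by rw [hγ]; positivity
  have key : crat a u n - crat a u (n+1) =
      -β * (crat a u (n+1) - crat a u (n+2)) + -γ * (crat a u (n+2) - crat a u (n+3)) := by
    rw [hβ, hγ]
    unfold crat
    rw [SRel] at ha0 hu0
    rw [ha0, hu0]
    have hz : (k n : ℝ) * (a (n+1) + a (n+2)) + a (n+3) ≠ 0 := by positivity
    field_simp
    ring
  set M := max |crat a u (n+1) - crat a u (n+2)| |crat a u (n+2) - crat a u (n+3)| with hM
  have hM0 : 0 ≤ M := le_trans (abs_nonneg _) (le_max_left _ _)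
  have hd1 : |crat a u (n+1) - crat a u (n+2)| ≤ M := le_max_left _ _
  have hd2 : |crat a u (n+2) - crat a u (n+3)| ≤ M := le_max_right _ _
  have hsum : β + γ ≤ 5/6 := by
    have hd := dec1 hk hp ha1
    have hh := half (n := n) hk hp ha1 ha2
    rw [hβ, hγ, ← add_div, div_le_iff₀ p0]
    rw [SRel] at ha0
    have p4 := hp (n+4)
    nlinarith [mul_le_mul_of_nonneg_left (show a (n+2) ≤ a (n+1) by linarith)
      (show (0:ℝ) ≤ k n by linarith)]
  calc |crat a u n - crat a u (n+1)|
      = |(-β) * (crat a u (n+1) - crat a u (n+2)) + (-γ) * (crat a u (n+2) - crat a u (n+3))| := by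
        rw [key]
    _ ≤ |(-β) * (crat a u (n+1) - crat a u (n+2))| + |(-γ) * (crat a u (n+2) - crat a u (n+3))| :=
        abs_add_le _ _
    _ = β * |crat a u (n+1) - crat a u (n+2)| + γ * |crat a u (n+2) - crat a u (n+3)| := by
        rw [abs_mul, abs_mul, abs_neg, abs_of_nonneg hbpos, abs_neg, abs_of_nonneg hgpos]
    _ ≤ β * M + γ * M := by
        have := mul_le_mul_of_nonneg_left hd1 hbpos
        have := mul_le_mul_of_nonneg_left hd2 hgpos
        linarith
    _ = (β + γ) * M := by ring
    _ ≤ 5/6 * M := mul_le_mul_of_nonneg_right hsum hM0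


lemma dbound (hk : ∀ i, 1 ≤ k i) (hp : ∀ n, 0 < a n) (hq : ∀ n, 0 < u n) {N : ℕ}
    (hr : ∀ m < N, SRel k a m) (hr' : ∀ m < N, SRel k u m) :
    ∀ n, n + 4 ≤ N → |crat a u n - crat a u (n+1)| ≤ 18 * min3 a u 0 := by
  intro n hn
  have h0 := crat_le9 hk hp hq hr hr' n (by omega)
  have h1 := crat_le9 hk hp hq hr hr' (n+1) (by omega)
  have p0 := crat_pos (a := a) (u := u) hp hq n
  have p1 := crat_pos (a := a) (u := u) hp hq (n+1)
  calc |crat a u n - crat a u (n+1)| ≤ |crat a u n| + |crat a u (n+1)| := abs_sub _ _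
    _ = crat a u n + crat a u (n+1) := by
        rw [abs_of_pos p0, abs_of_pos p1]
    _ ≤ 18 * min3 a u 0 := by linarith

lemma decay (hk : ∀ i, 1 ≤ k i) (hp : ∀ n, 0 < a n) (hq : ∀ n, 0 < u n) :
    ∀ j N n, (∀ m < N, SRel k a m) → (∀ m < N, SRel k u m) → n + 2*j + 4 ≤ N →
    |crat a u n - crat a u (n+1)| ≤ (5/6)^j * (18 * min3 a u 0) := by
  intro j
  induction j with
  | zero =>
    intro N n hr hr' hn
    simpa using dbound hk hp hq hr hr' n (by omega)
  | succ j ih =>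
    intro N n hr hr' hn
    have hc := contract (n := n) hk hp hq (hr n (by omega)) (hr (n+1) (by omega))
      (hr (n+2) (by omega)) (hr' n (by omega))
    have h1 := ih N (n+1) hr hr' (by omega)
    have h2 := ih N (n+2) hr hr' (by omega)
    have hmax : max |crat a u (n+1) - crat a u (n+2)| |crat a u (n+2) - crat a u (n+3)|
        ≤ (5/6)^j * (18 * min3 a u 0) := max_le h1 h2
    calc |crat a u n - crat a u (n+1)| ≤ 5/6 * max |crat a u (n+1) - crat a u (n+2)|
          |crat a u (n+2) - crat a u (n+3)| := hc
      _ ≤ 5/6 * ((5/6)^j * (18 * min3 a u 0)) := by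
          have : (0:ℝ) ≤ 5/6 := by norm_num
          exact mul_le_mul_of_nonneg_left hmax this
      _ = (5/6)^(j+1) * (18 * min3 a u 0) := by ring

lemma crat_const (hk : ∀ i, 1 ≤ k i) (hp : ∀ n, 0 < a n) (hq : ∀ n, 0 < u n)
    (hr : ∀ m, SRel k a m) (hr' : ∀ m, SRel k u m) :
    ∀ n, crat a u n = crat a u 0 := by
  have hzero : ∀ n, crat a u n - crat a u (n+1) = 0 := by
    intro n
    have hb : ∀ j : ℕ, |crat a u n - crat a u (n+1)| ≤ (5/6)^j * (18 * min3 a u 0) := by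
      intro j
      exact decay hk hp hq j (n + 2*j + 4) n (fun m _ => hr m) (fun m _ => hr' m) (by omega)
    have htend : Filter.Tendsto (fun j : ℕ => (5/6:ℝ)^j * (18 * min3 a u 0))
        Filter.atTop (nhds 0) := by
      have h5 : |(5/6:ℝ)| < 1 := by rw [abs_of_pos]; norm_num; norm_num
      simpa using (tendsto_pow_atTop_nhds_zero_of_abs_lt_one h5).mul_const (18 * min3 a u 0)
    have : |crat a u n - crat a u (n+1)| ≤ 0 :=
      ge_of_tendsto htend (Filter.Eventually.of_forall hb)
    have := abs_nonneg (crat a u n - crat a u (n+1))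
    have : |crat a u n - crat a u (n+1)| = 0 := le_antisymm ‹_› ‹_›
    exact abs_eq_zero.mp this
  intro n
  induction n with
  | zero => rfl
  | succ n ih => have := hzero n; linarith

end Core

section Repr
variable {k : ℕ → ℕ} {w : ℕ → Fin 3 → ℝ}

lemma repr_comp (hrel : ∀ i, w i = (Bmat (k i)).mulVec (w (i + 1))) (i : ℕ) :
    w i 0 = k i * (w (i+1) 0 + w (i+1) 1) + w (i+1) 2 ∧
    w i 1 = w (i+1) 0 ∧ w i 2 = w (i+1) 1 := by
  have h := hrel i
  rw [Bmat_mulVec] at h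
  refine ⟨?_, ?_, ?_⟩
  · have := congrFun h 0; simpa using this
  · have := congrFun h 1; simpa using this
  · have := congrFun h 2; simpa using this

lemma repr_srel (hrel : ∀ i, w i = (Bmat (k i)).mulVec (w (i + 1))) (m : ℕ) :
    SRel k (fun n => w n 0) m := by
  obtain ⟨e0, _, _⟩ := repr_comp hrel m
  obtain ⟨_, e1', e2'⟩ := repr_comp hrel (m+1)
  obtain ⟨_, e1'', _⟩ := repr_comp hrel (m+2)
  rw [SRel]
  show w m 0 = _
  rw [e0, e1', e2', e1'']

lemma repr_eq (hrel : ∀ i, w i = (Bmat (k i)).mulVec (w (i + 1))) (i : ℕ) (j : Fin 3) :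
    w i j = w (i + (j : ℕ)) 0 := by
  obtain ⟨_, e1, e2⟩ := repr_comp hrel i
  obtain ⟨_, e1', _⟩ := repr_comp hrel (i+1)
  fin_cases j
  · simp
  · simpa using e1
  · simpa [show i + 2 = i + 1 + 1 by omega] using e2.trans e1'

end Repr

theorem stmt4_uniq (k : ℕ → ℕ) (hk : ∀ i, 1 ≤ k i) (w w' : ℕ → Fin 3 → ℝ)
    (hw : ∀ i j, 0 < w i j) (hrel : ∀ i, w i = (Bmat (k i)).mulVec (w (i + 1)))
    (hw' : ∀ i j, 0 < w' i j) (hrel' : ∀ i, w' i = (Bmat (k i)).mulVec (w' (i + 1))) :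
    ∃ c : ℝ, 0 < c ∧ ∀ i, w' i = c • w i := by
  set a : ℕ → ℝ := fun n => w n 0 with ha
  set u : ℕ → ℝ := fun n => w' n 0 with hu
  have hp : ∀ n, 0 < a n := fun n => hw n 0
  have hq : ∀ n, 0 < u n := fun n => hw' n 0
  have hr : ∀ m, SRel k a m := repr_srel hrel
  have hr' : ∀ m, SRel k u m := repr_srel hrel'
  set c := u 0 / a 0 with hc
  have hcpos : 0 < c := div_pos (hq 0) (hp 0)
  have hconst : ∀ m, u m = c * a m := by
    intro m
    have := crat_const hk hp hq hr hr' m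
    rw [crat, crat] at this
    rw [hc, ← this]
    rw [div_mul_cancel₀ _ (ne_of_gt (hp m))]
  refine ⟨c, hcpos, ?_⟩
  intro i
  funext j
  have h1 : w' i j = u (i + (j:ℕ)) := repr_eq hrel' i j
  have h2 : w i j = a (i + (j:ℕ)) := repr_eq hrel i j
  rw [Pi.smul_apply, smul_eq_mul, h1, h2, hconst]

noncomputable def bseq (k : ℕ → ℕ) (N : ℕ) : ℕ → ℝ := fun n =>
  if N ≤ n then 1
  else (k n) * (bseq k N (n+1) + bseq k N (n+2)) + bseq k N (n+3)
termination_by n => N - n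
decreasing_by all_goals omega

section Bseq
variable {k : ℕ → ℕ} {N : ℕ}

lemma bseq_ge (h : N ≤ n) : bseq k N n = 1 := by rw [bseq, if_pos h]

lemma bseq_lt (h : n < N) :
    bseq k N n = (k n) * (bseq k N (n+1) + bseq k N (n+2)) + bseq k N (n+3) := by
  rw [bseq]; rw [if_neg (by omega)]

lemma bseq_rel (h : n < N) : SRel k (bseq k N) n := bseq_lt h

lemma bseq_pos (hk : ∀ i, 1 ≤ k i) : ∀ n, 0 < bseq k N n := by
  have key : ∀ d n, N ≤ n + d → 0 < bseq k N n := by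
    intro d
    induction d with
    | zero => intro n hn; rw [bseq_ge (by omega)]; norm_num
    | succ d ih =>
      intro n hn
      by_cases h : N ≤ n
      · rw [bseq_ge h]; norm_num
      · rw [bseq_lt (by omega)]
        have h1 := ih (n+1) (by omega)
        have h2 := ih (n+2) (by omega)
        have h3 := ih (n+3) (by omega)
        have := kcast hk n
        nlinarith
  intro n
  exact key N n (by omega)

lemma bseq_mono (hk : ∀ i, 1 ≤ k i) (n : ℕ) : bseq k N (n+1) ≤ bseq k N n := by
  by_cases h : N ≤ n
  · rw [bseq_ge h, bseq_ge (show N ≤ n+1 by omega)]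
  · rw [bseq_lt (show n < N by omega)]
    have h1 := bseq_pos (k := k) (N := N) hk (n+1)
    have h2 := bseq_pos (k := k) (N := N) hk (n+2)
    have h3 := bseq_pos (k := k) (N := N) hk (n+3)
    have := kcast hk n
    nlinarith

lemma bseq_le_zero (hk : ∀ i, 1 ≤ k i) : ∀ n, bseq k N n ≤ bseq k N 0 := by
  intro n
  induction n with
  | zero => exact le_refl _
  | succ n ih => exact le_trans (bseq_mono hk n) ih

noncomputable def Aseq (k : ℕ → ℕ) (N n : ℕ) : ℝ := bseq k N n / bseq k N 0

lemma Aseq_pos (hk : ∀ i, 1 ≤ k i) (n : ℕ) : 0 < Aseq k N n :=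
  div_pos (bseq_pos hk n) (bseq_pos hk 0)

lemma Aseq_zero (hk : ∀ i, 1 ≤ k i) : Aseq k N 0 = 1 :=
  div_self (ne_of_gt (bseq_pos hk 0))

lemma Aseq_le_one (hk : ∀ i, 1 ≤ k i) (n : ℕ) : Aseq k N n ≤ 1 := by
  rw [Aseq, div_le_one (bseq_pos hk 0)]
  exact bseq_le_zero hk n

lemma Aseq_rel (hk : ∀ i, 1 ≤ k i) (h : n < N) : SRel k (Aseq k N) n := by
  rw [SRel, Aseq, bseq_lt h]
  have h0 := ne_of_gt (bseq_pos (k := k) (N := N) hk 0)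
  rw [Aseq, Aseq, Aseq]
  field_simp

end Bseq

section CauchyPart
variable {k : ℕ → ℕ}

lemma Aseq_compare (hk : ∀ i, 1 ≤ k i) {N N' : ℕ} (hNN : N ≤ N') (i j : ℕ)
    (hij : i + 2*j + 5 ≤ N) :
    |Aseq k N' i - Aseq k N i| ≤ 18 * i * (5/6)^j := by
  set a := Aseq k N with haA
  set u := Aseq k N' with huA
  have hp : ∀ n, 0 < a n := fun n => Aseq_pos hk n
  have hq : ∀ n, 0 < u n := fun n => Aseq_pos hk n
  have hr : ∀ m, m < N → SRel k a m := fun m hm => Aseq_rel hk hm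
  have hr' : ∀ m, m < N → SRel k u m := fun m hm => Aseq_rel hk (lt_of_lt_of_le hm hNN)
  have hc0 : crat a u 0 = 1 := by
    rw [crat, haA, huA, Aseq_zero hk, Aseq_zero hk]; norm_num
  have hmin : min3 a u 0 ≤ 1 := by
    calc min3 a u 0 ≤ crat a u 0 := by rw [min3]; exact min_le_left _ _
      _ = 1 := hc0
  have hdb : ∀ t, t < i → |crat a u t - crat a u (t+1)| ≤ (5/6)^j * 18 := by
    intro t ht
    have := decay hk hp hq j N t hr hr' (by omega)
    have hpow : (0:ℝ) ≤ (5/6)^j := by positivity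
    nlinarith
  have tel : ∑ t ∈ Finset.range i, (crat a u (t+1) - crat a u t) = crat a u i - crat a u 0 :=
    Finset.sum_range_sub (fun t => crat a u t) i
  have htele : |crat a u i - 1| ≤ i * ((5/6)^j * 18) := by
    rw [← hc0, ← tel]
    calc |∑ t ∈ Finset.range i, (crat a u (t+1) - crat a u t)|
        ≤ ∑ t ∈ Finset.range i, |crat a u (t+1) - crat a u t| :=
          Finset.abs_sum_le_sum_abs _ _
      _ ≤ ∑ _t ∈ Finset.range i, ((5/6:ℝ)^j * 18) := by
          refine Finset.sum_le_sum ?_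
          intro t ht
          rw [abs_sub_comm]
          exact hdb t (Finset.mem_range.mp ht)
      _ = i * ((5/6)^j * 18) := by
          rw [Finset.sum_const, Finset.card_range]; simp [nsmul_eq_mul]
  have hui : u i - a i = a i * (crat a u i - 1) := by
    rw [crat, mul_sub, mul_one, mul_div_cancel₀ _ (ne_of_gt (hp i))]
  rw [show Aseq k N' i - Aseq k N i = u i - a i from rfl, hui, abs_mul,
    abs_of_pos (hp i)]
  have hle1 : a i ≤ 1 := Aseq_le_one hk i
  have habs : (0:ℝ) ≤ |crat a u i - 1| := abs_nonneg _
  have hpow : (0:ℝ) ≤ (5/6)^j := by positivity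
  calc a i * |crat a u i - 1| ≤ 1 * |crat a u i - 1| :=
        mul_le_mul_of_nonneg_right hle1 habs
    _ = |crat a u i - 1| := one_mul _
    _ ≤ i * ((5/6)^j * 18) := htele
    _ = 18 * i * (5/6)^j := by ring

lemma Aseq_cauchy (hk : ∀ i, 1 ≤ k i) (i : ℕ) : CauchySeq (fun N => Aseq k N i) := by
  rw [Metric.cauchySeq_iff']
  intro ε hε
  obtain ⟨j, hj⟩ : ∃ j : ℕ, (18 * i + 1) * (5/6:ℝ)^j < ε := by
    have habs : |(5/6:ℝ)| < 1 := by rw [abs_of_pos] <;> norm_num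
    have h1 : Filter.Tendsto (fun j : ℕ => (18 * (i:ℝ) + 1) * (5/6)^j)
        Filter.atTop (nhds 0) := by
      simpa using (tendsto_pow_atTop_nhds_zero_of_abs_lt_one habs).const_mul (18 * (i:ℝ) + 1)
    exact (h1.eventually_lt_const hε).exists
  refine ⟨i + 2*j + 5, fun n hn => ?_⟩
  rw [Real.dist_eq]
  have hcomp := Aseq_compare hk (N := i + 2*j + 5) (N' := n) hn i j (by omega)
  have hpow : (0:ℝ) < (5/6)^j := by positivity
  calc |Aseq k n i - Aseq k (i + 2*j + 5) i| ≤ 18 * i * (5/6)^j := hcomp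
    _ < (18 * i + 1) * (5/6)^j := by nlinarith
    _ < ε := hj

end CauchyPart

theorem stmt4_exist (k : ℕ → ℕ) (hk : ∀ i, 1 ≤ k i) :
    ∃ w : ℕ → Fin 3 → ℝ, (∀ i j, 0 < w i j) ∧ ∀ i, w i = (Bmat (k i)).mulVec (w (i + 1)) := by
  have hlim : ∀ i, ∃ L : ℝ, Filter.Tendsto (fun N => Aseq k N i) Filter.atTop (nhds L) :=
    fun i => cauchySeq_tendsto_of_complete (Aseq_cauchy hk i)
  choose a ha using hlim
  have ha0 : a 0 = 1 := by
    have h1 : Filter.Tendsto (fun N => Aseq k N 0) Filter.atTop (nhds 1) := by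
      have he : (fun N => Aseq k N 0) = fun _ => (1:ℝ) := funext (fun N => Aseq_zero hk)
      rw [he]; exact tendsto_const_nhds
    exact tendsto_nhds_unique (ha 0) h1
  have harel : ∀ n, SRel k a n := by
    intro n
    have hrhs : Filter.Tendsto
        (fun N => (k n : ℝ) * (Aseq k N (n+1) + Aseq k N (n+2)) + Aseq k N (n+3))
        Filter.atTop (nhds ((k n : ℝ) * (a (n+1) + a (n+2)) + a (n+3))) :=
      (((ha (n+1)).add (ha (n+2))).const_mul _).add (ha (n+3))
    have heq : (fun N => (k n : ℝ) * (Aseq k N (n+1) + Aseq k N (n+2)) + Aseq k N (n+3))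
        =ᶠ[Filter.atTop] (fun N => Aseq k N n) := by
      filter_upwards [Filter.eventually_ge_atTop (n+1)] with N hN
      exact (Aseq_rel hk (show n < N by omega)).symm
    exact tendsto_nhds_unique (ha n) (hrhs.congr' heq)
  have hle : ∀ n, a n ≤ 3 * k n * a (n+1) := by
    intro n
    have h2 : Filter.Tendsto (fun N => 3 * (k n : ℝ) * Aseq k N (n+1)) Filter.atTop
        (nhds (3 * (k n : ℝ) * a (n+1))) := (ha (n+1)).const_mul _
    refine le_of_tendsto_of_tendsto (ha n) h2 ?_
    filter_upwards [Filter.eventually_ge_atTop (n+2)] with N hN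
    exact le3k hk (fun m => Aseq_pos hk m) (Aseq_rel hk (show n < N by omega))
      (Aseq_rel hk (show n+1 < N by omega))
  have hpos : ∀ n, 0 < a n := by
    intro n
    induction n with
    | zero => rw [ha0]; norm_num
    | succ n ih =>
      have h1 := hle n
      have hk1 := kcast hk n
      by_contra h
      push_neg at h
      nlinarith
  refine ⟨fun i j => a (i + (j:ℕ)), fun i j => hpos _, ?_⟩
  intro i
  rw [Bmat_mulVec]
  funext j
  fin_cases j
  · show a (i + 0) = (k i : ℝ) * (a (i+1+0) + a (i+1+1)) + a (i+1+2)
    have := harel i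
    rw [SRel] at this
    simpa [show i+1+1 = i+2 by omega, show i+1+2 = i+3 by omega] using this
  · show a (i + 1) = a (i+1+0)
    norm_num
  · show a (i + 2) = a (i+1+1)
    congr 1

theorem stmt4 (k : ℕ → ℕ) (hk : ∀ i, 1 ≤ k i) :
    (∃ w : ℕ → Fin 3 → ℝ, (∀ i j, 0 < w i j) ∧ ∀ i, w i = (Bmat (k i)).mulVec (w (i + 1))) ∧
    (∀ w w' : ℕ → Fin 3 → ℝ,
      (∀ i j, 0 < w i j) → (∀ i, w i = (Bmat (k i)).mulVec (w (i + 1))) →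
      (∀ i j, 0 < w' i j) → (∀ i, w' i = (Bmat (k i)).mulVec (w' (i + 1))) →
      ∃ c : ℝ, 0 < c ∧ ∀ i, w' i = c • w i) :=
  ⟨stmt4_exist k hk, fun w w' hw hrel hw' hrel' => stmt4_uniq k hk w w' hw hrel hw' hrel'⟩
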